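/- arXiv:1507.06187 — 3 statements merged into one kernel-verified Lean document; each statement's English description precedes it below -/
import Mathlib

section
/- Every countably infinite graph in which every two distinct vertices are joined by infinitely many pairwise internally disjoint finite paths, and which is connected on all of its vertices (i.e., the whole vertex set is ω-connected), admits an enumeration v_0, v_1, v_2, ... of all its vertices such that consecutive vertices are adjacent (i.e., the graph contains a Hamiltonian path of order type ω). -/
open Cardinal

universe u

variable {V : Type u}

/-- Two walks between the same endpoints intersect only in the endpoints. -/
def IntDisjoint {G : SimpleGraph V} {v w : V} (p q : G.Walk v w) : Prop :=
  ∀ x, x ∈ p.support → x ∈ q.support → x = v ∨ x = w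

/-- `A` is κ-unseparable in `G`: any two distinct vertices of `A` are joined by
κ-many pairwise internally disjoint finite paths. -/
def Unseparable (G : SimpleGraph V) (A : Set V) (κ : Cardinal.{u}) : Prop :=
  ∀ v ∈ A, ∀ w ∈ A, v ≠ w →
    ∃ P : Set (G.Path v w), κ ≤ #P ∧
      ∀ p ∈ P, ∀ q ∈ P, p ≠ q → IntDisjoint (p : G.Path v w).1 (q : G.Path v w).1

/-- A path in Rado's sense inside the graph `G`: a set of vertices together with a
well-ordering such that the set of earlier neighbours of each vertex is cofinal below it. -/
structure RadoPath (G : SimpleGraph V) where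
  verts : Set V
  lt : verts → verts → Prop
  wo : IsWellOrder verts lt
  cofinal : ∀ v x : verts, lt x v → ∃ w : verts, G.Adj ↑w ↑v ∧ lt w v ∧ ¬ lt w x

/-- The order type of a Rado path. -/
noncomputable def RadoPath.otype {G : SimpleGraph V} (P : RadoPath G) : Ordinal.{u} :=
  @Ordinal.type P.verts P.lt P.wo

/-- `P` is concentrated on `A`: for every limit point `y` of `P` and every `x` below `y`,
the interval `[x, y)` contains a neighbour of `y` lying in `A`. -/
def RadoPath.ConcentratedOn {G : SimpleGraph V} (P : RadoPath G) (A : Set V) : Prop :=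
  ∀ y : P.verts, ((∃ x, P.lt x y) ∧ ∀ x, P.lt x y → ∃ z, P.lt x z ∧ P.lt z y) →
    ∀ x : P.verts, P.lt x y →
      ∃ w : P.verts, (↑w : V) ∈ A ∧ G.Adj ↑w ↑y ∧ ¬ P.lt w x ∧ P.lt w y

/-- The subgraph of `G` consisting of the edges of colour `i`. -/
def colGraph (G : SimpleGraph V) {r : ℕ} (c : Sym2 V → Fin r) (i : Fin r) :
    SimpleGraph V where
  Adj a b := G.Adj a b ∧ c s(a, b) = i
  symm := by
    constructor
    intro a b h
    refine ⟨h.1.symm, ?_⟩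
    rw [Sym2.eq_swap]
    exact h.2
  loopless := by constructor; intro a h; exact G.ne_of_adj h.1 rfl

/-- The restriction of `G` to the vertices in `S` (as a graph on the same vertex type). -/
def restrictTo (G : SimpleGraph V) (S : Set V) : SimpleGraph V where
  Adj a b := G.Adj a b ∧ a ∈ S ∧ b ∈ S
  symm := by constructor; intro a b h; exact ⟨h.1.symm, h.2.2, h.2.1⟩
  loopless := by constructor; intro a h; exact G.ne_of_adj h.1 rfl

/-- The common neighbourhood `N_G[X] = ⋂_{x ∈ X} N_G(x)`. -/
def commonNbhd (G : SimpleGraph V) (X : Set V) : Set V :=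
  {v | ∀ x ∈ X, G.Adj x v}

/-- `G` is κ-complete: it has at least κ vertices and every vertex has fewer than κ
non-neighbours. -/
def KComplete (G : SimpleGraph V) (κ : Cardinal.{u}) : Prop :=
  κ ≤ #V ∧ ∀ x : V, #{v : V | ¬ G.Adj x v} < κ

/-- `G` is of type `H_{κ,κ}` with decomposition `(A, B)`. -/
def IsHDecomp (G : SimpleGraph V) (κ : Cardinal.{u}) (A B : Set V) : Prop :=
  ∃ a b : Ordinal.{u} → V,
    Set.InjOn a (Set.Iio κ.ord) ∧ Set.InjOn b (Set.Iio κ.ord) ∧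
    a '' Set.Iio κ.ord = A ∧ b '' Set.Iio κ.ord = B ∧
    ∀ ξ ζ : Ordinal.{u}, ξ ≤ ζ → ζ < κ.ord → G.Adj (a ξ) (b ζ)

/-- `G` is of type `H_{κ,κ}` with main class `A`. -/
def IsHType (G : SimpleGraph V) (κ : Cardinal.{u}) (A : Set V) : Prop :=
  ∃ B : Set V, IsHDecomp G κ A B

/-- A finite family of increasing covers, witnessing that a set is (𝒜,κ)-centered. -/
structure CenteredWitness (V : Type u) where
  I : Type
  fin : Finite I
  lam : I → Ordinal.{u}
  fam : I → Ordinal.{u} → Set V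

/-- An 𝒜-box: the intersection `⋂_{i ∈ I} A^i_{f i}`. -/
def CenteredWitness.Box (𝒜 : CenteredWitness V) (f : 𝒜.I → Ordinal.{u}) : Set V :=
  ⋂ i, 𝒜.fam i (f i)

/-- `A` is (𝒜,κ)-centered in `G`. -/
def IsCentered (G : SimpleGraph V) (A : Set V) (𝒜 : CenteredWitness V)
    (κ : Cardinal.{u}) : Prop :=
  (∀ i, ∀ α β : Ordinal.{u}, α ≤ β → β < 𝒜.lam i → 𝒜.fam i α ⊆ 𝒜.fam i β) ∧
  (∀ i, A ⊆ ⋃ α ∈ Set.Iio (𝒜.lam i), 𝒜.fam i α) ∧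
  (∀ f : 𝒜.I → Ordinal.{u}, (∀ i, f i < 𝒜.lam i) → κ ≤ #(commonNbhd G (𝒜.Box f)))

/-- The set `S` carries a (finite or ω-type) path all of whose edges have colour `i`. -/
def CarriesPath {r : ℕ} (c : Sym2 ℕ → Fin r) (i : Fin r) (S : Set ℕ) : Prop :=
  (∃ l : List ℕ, l.Nodup ∧ (↑l.toFinset : Set ℕ) = S ∧
      l.Chain' (fun a b => c s(a, b) = i)) ∨
  (∃ f : ℕ → ℕ, Function.Injective f ∧ Set.range f = S ∧
      ∀ n : ℕ, c s(f n, f (n + 1)) = i)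

section HamAux
variable {W : Type} {G : SimpleGraph W}



lemma exists_path_avoiding (h : Unseparable G Set.univ ℵ₀)
    (F : Finset W) (v w : W) (hvw : v ≠ w) (hv : v ∉ F) (hw : w ∉ F) :
    ∃ p : G.Walk v w, p.IsPath ∧ ∀ x ∈ p.support, x ∉ F := by
  obtain ⟨P, hP, hdisj⟩ := h v trivial w trivial hvw
  have hinf : P.Infinite := by
    rw [← Set.infinite_coe_iff, Cardinal.infinite_iff]; exact hP
  set B : Set (G.Path v w) := {p ∈ P | ∃ x ∈ F, x ∈ (p : G.Walk v w).support} with hB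
  have hBfin : B.Finite := by
    rw [← Set.finite_coe_iff]
    have : ∀ p : B, ∃ x : F, (x : W) ∈ ((p : G.Path v w) : G.Walk v w).support := by
      rintro ⟨p, hpP, x, hxF, hxs⟩
      exact ⟨⟨x, hxF⟩, hxs⟩
    choose φ hφ using this
    have hinj : Function.Injective φ := by
      intro p q hpq
      by_contra hne
      have hne' : (p : G.Path v w) ≠ q := fun hh => hne (Subtype.ext hh)
      have := hdisj p p.2.1 q q.2.1 hne' (φ p) (hφ p) (hpq ▸ hφ q)
      rcases this with h1 | h1
      · exact hv (h1 ▸ (φ p).2)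
      · exact hw (h1 ▸ (φ p).2)
    exact Finite.of_injective φ hinj
  obtain ⟨p, hpP, hpB⟩ := (hinf.diff hBfin).nonempty
  refine ⟨(p : G.Walk v w), p.2, ?_⟩
  intro x hx hxF
  exact hpB ⟨hpP, x, hxF, hx⟩

noncomputable local instance : DecidableEq W := Classical.decEq W

lemma extend_path (h : Unseparable G Set.univ ℵ₀)
    (l : List W) (hne : l ≠ []) (hnd : l.Nodup) (hch : l.Chain' G.Adj) (u : W) :
    ∃ l' : List W, l <+: l' ∧ l' ≠ [] ∧ l'.Nodup ∧ l'.Chain' G.Adj ∧ u ∈ l' := by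
  by_cases hu : u ∈ l
  · exact ⟨l, List.prefix_refl l, hne, hnd, hch, hu⟩
  set v := l.getLast hne with hv
  have hvl : v ∈ l := List.getLast_mem hne
  have hvu : v ≠ u := fun hh => hu (hh ▸ hvl)
  obtain ⟨p, hp, havoid⟩ := exists_path_avoiding h (l.toFinset.erase v) v u hvu
    (Finset.notMem_erase v _) (fun hc => hu (List.mem_toFinset.1 (Finset.mem_of_mem_erase hc)))
  -- p.support = v :: p.support.tail
  have hsupp : p.support = v :: p.support.tail := p.support_eq_cons
  refine ⟨l ++ p.support.tail, List.prefix_append l _, by simp [hne], ?_, ?_, ?_⟩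
  · rw [List.nodup_append]
    refine ⟨hnd, ?_, ?_⟩
    · exact (hp.support_nodup.sublist (List.tail_sublist _) : _)
    · intro x hxl y hyt hxy
      have hxt : x ∈ p.support.tail := hxy ▸ hyt
      have hxs : x ∈ p.support := by rw [hsupp]; exact List.mem_cons_of_mem _ hxt
      have := havoid x hxs
      have hxv : x = v := by
        by_contra hxv
        exact this (Finset.mem_erase.2 ⟨hxv, List.mem_toFinset.2 hxl⟩)
      have : v ∉ p.support.tail := by
        have := hp.support_nodup
        rw [hsupp] at this
        exact (List.nodup_cons.1 this).1
      exact this (hxv ▸ hxt)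
  · refine List.IsChain.append hch ((p.isChain_adj_support).tail) ?_
    intro x hx y hy
    rw [List.getLast?_eq_getLast hne] at hx
    have hx' : x = v := by simpa [hv] using hx.symm
    have hchain := p.isChain_adj_support
    rw [hsupp] at hchain
    rcases List.isChain_cons.1 hchain with ⟨h1, _⟩
    exact hx' ▸ h1 y hy
  · have : u ∈ p.support := p.end_mem_support
    rw [hsupp] at this
    rcases List.mem_cons.1 this with ht | ht
    · exact absurd ht.symm hvu
    · exact List.mem_append_right _ ht


end HamAux

/-- Every countably infinite ω-connected graph (every two distinct vertices
joined by infinitely many pairwise internally disjoint finite paths) has a Hamiltonian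
path of order type ω. -/
theorem stmt0 {V : Type} [Countable V] [Infinite V] (G : SimpleGraph V)
    (h : Unseparable G Set.univ ℵ₀) :
    ∃ e : ℕ ≃ V, ∀ n : ℕ, G.Adj (e n) (e (n + 1)) := by
  obtain ⟨e₀⟩ : Nonempty (ℕ ≃ V) := nonempty_equiv_of_countable
  have step : ∀ l : List V, (l ≠ [] ∧ l.Nodup ∧ l.Chain' G.Adj) → ∀ u : V,
      ∃ l' : List V, l <+: l' ∧ (l' ≠ [] ∧ l'.Nodup ∧ l'.Chain' G.Adj) ∧ u ∈ l' := by
    rintro l ⟨h1, h2, h3⟩ u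
    obtain ⟨l', p1, p2, p3, p4, p5⟩ := extend_path h l h1 h2 h3 u
    exact ⟨l', p1, ⟨p2, p3, p4⟩, p5⟩
  choose f hf using step
  set L : ℕ → {l : List V // l ≠ [] ∧ l.Nodup ∧ l.Chain' G.Adj} :=
    fun n => Nat.rec ⟨[e₀ 0], by simp, by simp, List.isChain_singleton _⟩
      (fun n p => ⟨f p.1 p.2 (e₀ n), (hf p.1 p.2 (e₀ n)).2.1⟩) n with hL
  have hpre : ∀ n, (L n).1 <+: (L (n + 1)).1 := fun n => (hf (L n).1 (L n).2 (e₀ n)).1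
  have hmem : ∀ n, e₀ n ∈ (L (n + 1)).1 := fun n => (hf (L n).1 (L n).2 (e₀ n)).2.2
  have hpre' : ∀ m n, m ≤ n → (L m).1 <+: (L n).1 := by
    intro m n hmn
    induction n with
    | zero => exact (Nat.le_zero.1 hmn) ▸ List.prefix_refl _
    | succ n ih =>
      rcases Nat.lt_or_ge m (n + 1) with hc | hc
      · exact (ih (Nat.lt_succ_iff.1 hc)).trans (hpre n)
      · exact (Nat.le_antisymm hmn hc) ▸ List.prefix_refl _
  classical
  have hlen : ∀ n, n ≤ (L n).1.length := by
    intro n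
    have hsub : (Finset.range n).image e₀ ⊆ (L n).1.toFinset := by
      intro x hx
      obtain ⟨k, hk, rfl⟩ := Finset.mem_image.1 hx
      rw [List.mem_toFinset]
      exact (hpre' (k + 1) n (Finset.mem_range.1 hk)).subset (hmem k)
    calc n = ((Finset.range n).image e₀).card := by
              rw [Finset.card_image_of_injective _ e₀.injective, Finset.card_range]
      _ ≤ (L n).1.toFinset.card := Finset.card_le_card hsub
      _ ≤ (L n).1.length := (L n).1.toFinset_card_le
  have hlt : ∀ k, k < (L (k + 1)).1.length := fun k => Nat.lt_of_lt_of_le (Nat.lt_succ_self k) (hlen (k + 1))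
  set g : ℕ → V := fun k => (L (k + 1)).1[k]'(hlt k) with hg
  have hconsist : ∀ k n (hkn : k + 1 ≤ n), g k = (L n).1[k]'(Nat.lt_of_lt_of_le (hlt k) (hpre' _ _ hkn).length_le) := by
    intro k n hkn
    exact (hpre' (k + 1) n hkn).getElem (hlt k)
  have hginj : Function.Injective g := by
    intro a b hab
    rcases Nat.lt_trichotomy a b with hc | hc | hc
    · have ha := hconsist a (b + 1) (by omega)
      have : (L (b + 1)).1[a]'(Nat.lt_of_lt_of_le (by omega) (hlen (b + 1))) = (L (b + 1)).1[b]'(hlt b) := by rw [← ha, hab]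
      exact absurd (((L (b + 1)).2.2.1.getElem_inj_iff).1 this) (Nat.ne_of_lt hc)
    · exact hc
    · have hb := hconsist b (a + 1) (by omega)
      have : (L (a + 1)).1[a]'(hlt a) = (L (a + 1)).1[b]'(Nat.lt_of_lt_of_le (by omega) (hlen (a + 1))) := by rw [← hb, ← hab]
      exact ((L (a + 1)).2.2.1.getElem_inj_iff).1 this
  have hgsurj : Function.Surjective g := by
    intro v
    set m := e₀.symm v with hm
    have hv : v ∈ (L (m + 1)).1 := by
      have := hmem m
      rwa [hm, Equiv.apply_symm_apply] at this
    obtain ⟨i, hi, hiv⟩ := List.mem_iff_getElem.1 hv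
    refine ⟨i, ?_⟩
    show g i = v
    have h1 := hconsist i (max (i + 1) (m + 1)) (le_max_left _ _)
    have h2 := (hpre' (m + 1) (max (i + 1) (m + 1)) (le_max_right _ _)).getElem hi
    rw [h1, ← h2, hiv]
  have hadj : ∀ n, G.Adj (g n) (g (n + 1)) := by
    intro n
    have h1 := hconsist n (n + 2) (by omega)
    have h2 := hconsist (n + 1) (n + 2) (by omega)
    have hch : List.IsChain G.Adj (L (n + 2)).1 := (L (n + 2)).2.2.2
    rw [List.isChain_iff_getElem] at hch
    have := hch n (by have h3 : n + 1 < ((L (n + 2)).1).length := hlt (n + 1); omega)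
    rw [h1, h2]
    simpa [List.get_eq_getElem] using this
  exact ⟨Equiv.ofBijective g ⟨hginj, hgsurj⟩, hadj⟩
end

section
/- Let H be a graph of type H_{κ,κ} with main class A, for any infinite cardinal κ. Then H contains a path (in Rado's sense) of order type κ which covers A and is concentrated on A. -/
open Cardinal

universe u

variable {V : Type u}

noncomputable def hkF (a b : Ordinal.{u} → V) (κ : Cardinal.{u}) :
    Ordinal.{u} → Ordinal.{u} × Ordinal.{u} :=
  Ordinal.lt_wf.fix fun ξ F =>
    (sInf {k | k < κ.ord ∧ a k ∉ {x | ∃ η, ∃ hη : η < ξ, x = a (F η hη).1 ∨ x = b (F η hη).2}},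
     sInf {h | h < κ.ord ∧
        b h ∉ {x | ∃ η, ∃ hη : η < ξ, x = a (F η hη).1 ∨ x = b (F η hη).2} ∧
        b h ≠ a (sInf {k | k < κ.ord ∧ a k ∉ {x | ∃ η, ∃ hη : η < ξ, x = a (F η hη).1 ∨ x = b (F η hη).2}}) ∧
        sInf {k | k < κ.ord ∧ a k ∉ {x | ∃ η, ∃ hη : η < ξ, x = a (F η hη).1 ∨ x = b (F η hη).2}} ≤ h ∧
        ∀ η, ∀ hη : η < ξ, (F η hη).1 < h})

noncomputable def hkK (a b : Ordinal.{u} → V) (κ : Cardinal.{u}) (ξ : Ordinal.{u}) : Ordinal.{u} :=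
  (hkF a b κ ξ).1

noncomputable def hkH (a b : Ordinal.{u} → V) (κ : Cardinal.{u}) (ξ : Ordinal.{u}) : Ordinal.{u} :=
  (hkF a b κ ξ).2

def hkUsed (a b : Ordinal.{u} → V) (κ : Cardinal.{u}) (ξ : Ordinal.{u}) : Set V :=
  {x | ∃ η, ∃ _ : η < ξ, x = a (hkK a b κ η) ∨ x = b (hkH a b κ η)}

def hkKset (a b : Ordinal.{u} → V) (κ : Cardinal.{u}) (ξ : Ordinal.{u}) : Set Ordinal.{u} :=
  {k | k < κ.ord ∧ a k ∉ hkUsed a b κ ξ}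

def hkHset (a b : Ordinal.{u} → V) (κ : Cardinal.{u}) (ξ : Ordinal.{u}) : Set Ordinal.{u} :=
  {h | h < κ.ord ∧ b h ∉ hkUsed a b κ ξ ∧ b h ≠ a (hkK a b κ ξ) ∧ hkK a b κ ξ ≤ h ∧
    ∀ η, ∀ _ : η < ξ, hkK a b κ η < h}

theorem hkK_eq (a b : Ordinal.{u} → V) (κ : Cardinal.{u}) (ξ : Ordinal.{u}) :
    hkK a b κ ξ = sInf (hkKset a b κ ξ) := by
  show (hkF a b κ ξ).1 = _
  rw [hkF, WellFounded.fix_eq]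
  rfl

theorem hkH_eq (a b : Ordinal.{u} → V) (κ : Cardinal.{u}) (ξ : Ordinal.{u}) :
    hkH a b κ ξ = sInf (hkHset a b κ ξ) := by
  simp only [hkHset, hkK_eq a b κ ξ]
  show (hkF a b κ ξ).2 = _
  rw [hkF, WellFounded.fix_eq]
  rfl

section facts
variable (a b : Ordinal.{u} → V) (κ : Cardinal.{u})

theorem hkUsed_card (ξ : Ordinal.{u}) : #(hkUsed a b κ ξ) ≤ ξ.card + ξ.card := by
  have hsub : hkUsed a b κ ξ ⊆
      (fun η => a (hkK a b κ η)) '' Set.Iio ξ ∪ (fun η => b (hkH a b κ η)) '' Set.Iio ξ := by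
    rintro x ⟨η, hη, hx | hx⟩
    · exact Or.inl ⟨η, hη, hx.symm⟩
    · exact Or.inr ⟨η, hη, hx.symm⟩
  rw [← Cardinal.lift_le.{u+1}]
  have h1 := (Cardinal.mk_le_mk_of_subset hsub).trans (Cardinal.mk_union_le _ _)
  have h2 : Cardinal.lift.{u+1} #((fun η => a (hkK a b κ η)) '' Set.Iio ξ : Set V)
      ≤ Cardinal.lift.{u+1} ξ.card := by
    refine Cardinal.mk_image_le_lift.trans ?_
    rw [Ordinal.mk_Iio_ordinal, Cardinal.lift_lift]
  have h3 : Cardinal.lift.{u+1} #((fun η => b (hkH a b κ η)) '' Set.Iio ξ : Set V)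
      ≤ Cardinal.lift.{u+1} ξ.card := by
    refine Cardinal.mk_image_le_lift.trans ?_
    rw [Ordinal.mk_Iio_ordinal, Cardinal.lift_lift]
  calc Cardinal.lift.{u+1} #(hkUsed a b κ ξ)
      ≤ Cardinal.lift.{u+1} (#((fun η => a (hkK a b κ η)) '' Set.Iio ξ : Set V)
          + #((fun η => b (hkH a b κ η)) '' Set.Iio ξ : Set V)) := Cardinal.lift_le.2 h1
    _ = Cardinal.lift.{u+1} #((fun η => a (hkK a b κ η)) '' Set.Iio ξ : Set V)
          + Cardinal.lift.{u+1} #((fun η => b (hkH a b κ η)) '' Set.Iio ξ : Set V) := by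
        rw [Cardinal.lift_add]
    _ ≤ Cardinal.lift.{u+1} ξ.card + Cardinal.lift.{u+1} ξ.card := add_le_add h2 h3
    _ = Cardinal.lift.{u+1} (ξ.card + ξ.card) := by rw [Cardinal.lift_add]

theorem exists_fresh (hκ : ℵ₀ ≤ κ) (f : Ordinal.{u} → V) (hf : Set.InjOn f (Set.Iio κ.ord))
    (u : Set V) (hu : #u < κ) (T : Set Ordinal.{u})
    (hT : #(Set.Iio κ.ord \ T : Set Ordinal.{u}) < Cardinal.lift.{u+1} κ) :
    ∃ k, (k < κ.ord ∧ k ∈ T) ∧ f k ∉ u := by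
  by_contra hc
  push_neg at hc
  have hsub : f '' (Set.Iio κ.ord ∩ T) ⊆ u := by
    rintro x ⟨k, ⟨hk1, hk2⟩, rfl⟩
    exact hc k ⟨hk1, hk2⟩
  have h1 : Cardinal.lift.{u+1} #(f '' (Set.Iio κ.ord ∩ T) : Set V)
      = #(Set.Iio κ.ord ∩ T : Set Ordinal.{u}) := by
    have := Cardinal.mk_image_eq_of_injOn_lift f (Set.Iio κ.ord ∩ T)
      (hf.mono Set.inter_subset_left)
    rwa [Cardinal.lift_id'.{u,u+1}] at this
  have h2 : Cardinal.lift.{u+1} κ ≤ #(Set.Iio κ.ord ∩ T : Set Ordinal.{u}) := by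
    have hsplit : (Set.Iio κ.ord : Set Ordinal.{u}) ⊆
        (Set.Iio κ.ord ∩ T) ∪ (Set.Iio κ.ord \ T) := by
      intro x hx
      by_cases hxT : x ∈ T
      · exact Or.inl ⟨hx, hxT⟩
      · exact Or.inr ⟨hx, hxT⟩
    have hle := (Cardinal.mk_le_mk_of_subset hsplit).trans (Cardinal.mk_union_le _ _)
    rw [Ordinal.mk_Iio_ordinal, Cardinal.card_ord] at hle
    by_contra hy
    push_neg at hy
    have : ℵ₀ ≤ Cardinal.lift.{u+1} κ := Cardinal.aleph0_le_lift.2 hκ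
    exact absurd hle (not_le.2 (Cardinal.add_lt_of_lt this hy hT))
  have h3 : #(Set.Iio κ.ord ∩ T : Set Ordinal.{u}) ≤ Cardinal.lift.{u+1} #u :=
    h1 ▸ Cardinal.lift_le.2 (Cardinal.mk_le_mk_of_subset hsub)
  exact absurd ((h2.trans h3)) (not_le.2 (Cardinal.lift_lt.2 hu))

end facts

section main
variable (a b : Ordinal.{u} → V) (κ : Cardinal.{u})

theorem hkMain (hκ : ℵ₀ ≤ κ) (ha : Set.InjOn a (Set.Iio κ.ord))
    (hb : Set.InjOn b (Set.Iio κ.ord)) :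
    ∀ ξ, ξ < κ.ord → hkK a b κ ξ ∈ hkKset a b κ ξ ∧
      (hkK a b κ ξ).card ≤ ξ.card + ξ.card ∧ hkH a b κ ξ ∈ hkHset a b κ ξ := by
  intro ξ
  induction ξ using Ordinal.induction with
  | _ ξ IH =>
  intro hξ
  have hξc : ξ.card < κ := Cardinal.lt_ord.1 hξ
  have husedlt : #(hkUsed a b κ ξ) < κ :=
    lt_of_le_of_lt (hkUsed_card a b κ ξ) (Cardinal.add_lt_of_lt hκ hξc hξc)
  -- the K step
  have hKne : (hkKset a b κ ξ).Nonempty := by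
    obtain ⟨k, ⟨hk1, _⟩, hk2⟩ := exists_fresh κ hκ a ha (hkUsed a b κ ξ) husedlt Set.univ
      (by
        rw [Set.diff_univ, Cardinal.mk_emptyCollection]
        exact aleph0_pos.trans_le (Cardinal.aleph0_le_lift.2 hκ))
    exact ⟨k, hk1, hk2⟩
  have hK : hkK a b κ ξ ∈ hkKset a b κ ξ := by
    rw [hkK_eq]; exact csInf_mem hKne
  have hKcard : (hkK a b κ ξ).card ≤ ξ.card + ξ.card := by
    have hemb : Function.Injective (fun k' : Set.Iio (hkK a b κ ξ) =>
        (⟨a k'.1, by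
          have hk'1 : k'.1 < κ.ord := k'.2.trans hK.1
          have hns : k'.1 ∉ hkKset a b κ ξ :=
            notMem_of_lt_csInf (hkK_eq a b κ ξ ▸ k'.2) (OrderBot.bddBelow _)
          simp only [hkKset, Set.mem_setOf_eq, not_and, not_not] at hns
          exact hns hk'1⟩ : hkUsed a b κ ξ)) := by
      intro k1 k2 h12
      exact Subtype.ext (ha (k1.2.trans hK.1) (k2.2.trans hK.1) (congrArg Subtype.val h12))
    have hle : Cardinal.lift.{u} #(Set.Iio (hkK a b κ ξ))
        ≤ Cardinal.lift.{u+1} #(hkUsed a b κ ξ) := Cardinal.lift_mk_le'.2 ⟨⟨_, hemb⟩⟩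
    rw [Ordinal.mk_Iio_ordinal, Cardinal.lift_lift] at hle
    exact Cardinal.lift_le.1 (hle.trans (Cardinal.lift_le.2 (hkUsed_card a b κ ξ)))
  refine ⟨hK, hKcard, ?_⟩
  -- the H step
  set c : Cardinal.{u} := ξ.card + ξ.card + 1 with hc
  have hclt : c < κ := Cardinal.add_lt_of_lt hκ (Cardinal.add_lt_of_lt hκ hξc hξc)
    (one_lt_aleph0.trans_le hκ)
  have hbound : ∀ ρ, (hkK a b κ ρ).card ≤ ξ.card + ξ.card →
      #(Set.Iio (hkK a b κ ρ + 1)) ≤ Cardinal.lift.{u+1} c := by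
    intro ρ hρ
    rw [Ordinal.mk_Iio_ordinal, Ordinal.card_add, Ordinal.card_one, Cardinal.lift_le, hc]
    exact add_le_add hρ le_rfl
  have hTsmall : #(Set.Iio κ.ord \ {x | hkK a b κ ξ ≤ x ∧ ∀ η, η < ξ → hkK a b κ η < x} :
      Set Ordinal.{u}) < Cardinal.lift.{u+1} κ := by
    have hsub : (Set.Iio κ.ord \ {x | hkK a b κ ξ ≤ x ∧ ∀ η, η < ξ → hkK a b κ η < x} :
        Set Ordinal.{u}) ⊆
        Set.Iio (hkK a b κ ξ + 1) ∪ ⋃ η ∈ Set.Iio ξ, Set.Iio (hkK a b κ η + 1) := by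
      rintro x ⟨-, hx2⟩
      simp only [Set.mem_setOf_eq, not_and, not_forall, not_lt] at hx2
      by_cases hxK : hkK a b κ ξ ≤ x
      · obtain ⟨η, hη, hxη⟩ := hx2 hxK
        exact Or.inr (Set.mem_biUnion hη (Order.lt_add_one_iff.2 hxη))
      · exact Or.inl ((lt_of_not_ge hxK).trans (Order.lt_add_one_iff.2 le_rfl))
    refine lt_of_le_of_lt ((Cardinal.mk_le_mk_of_subset hsub).trans (Cardinal.mk_union_le _ _)) ?_
    have hu2 : #(⋃ η ∈ Set.Iio ξ, Set.Iio (hkK a b κ η + 1))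
        ≤ Cardinal.lift.{u+1} ξ.card * Cardinal.lift.{u+1} c := by
      rw [Set.biUnion_eq_iUnion]
      refine le_trans Cardinal.mk_iUnion_le_sum_mk ?_
      have := Cardinal.sum_le_sum (fun η : Set.Iio ξ => #(Set.Iio (hkK a b κ η.1 + 1)))
        (fun _ => Cardinal.lift.{u+1} c) (fun η => by
          have hη : η.1 < ξ := Set.mem_Iio.mp η.2
          refine hbound η.1 (le_trans (IH η.1 hη (hη.trans hξ)).2.1 ?_)
          exact add_le_add (Ordinal.card_le_card hη.le) (Ordinal.card_le_card hη.le))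
      refine this.trans ?_
      rw [Cardinal.sum_const', Ordinal.mk_Iio_ordinal]
    refine lt_of_le_of_lt (add_le_add (hbound ξ hKcard) hu2) ?_
    rw [← Cardinal.lift_mul, ← Cardinal.lift_add, Cardinal.lift_lt]
    exact Cardinal.add_lt_of_lt hκ hclt (Cardinal.mul_lt_of_lt hκ hξc hclt)
  have husedlt' : #(hkUsed a b κ ξ ∪ {a (hkK a b κ ξ)} : Set V) < κ := by
    refine lt_of_le_of_lt (Cardinal.mk_union_le _ _) ?_
    rw [Cardinal.mk_singleton]
    exact Cardinal.add_lt_of_lt hκ husedlt (one_lt_aleph0.trans_le hκ)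
  obtain ⟨h, ⟨hh1, hh2⟩, hh3⟩ := exists_fresh κ hκ b hb _ husedlt' _ hTsmall
  have hHmem : h ∈ hkHset a b κ ξ := by
    refine ⟨hh1, fun hmem => hh3 (Or.inl hmem), fun heq => hh3 (Or.inr heq), hh2.1, ?_⟩
    intro η hη
    exact hh2.2 η hη
  rw [hkH_eq]
  exact csInf_mem ⟨h, hHmem⟩

theorem hkKcard_le_bound : True := trivial

end main

theorem ord_mod_two (α : Ordinal.{u}) : α % 2 = 0 ∨ α % 2 = 1 := by
  have h := Ordinal.mod_lt α (two_ne_zero (α := Ordinal))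
  have h2 : α % 2 ≤ 1 := by
    rwa [← Order.lt_succ_iff, show Order.succ (1 : Ordinal) = 2 by
      rw [← Ordinal.add_one_eq_succ]; norm_num]
  exact Ordinal.le_one_iff.1 h2

noncomputable def hkV (a b : Ordinal.{u} → V) (κ : Cardinal.{u}) (α : Ordinal.{u}) : V :=
  if α % 2 = 0 then b (hkH a b κ (α / 2)) else a (hkK a b κ (α / 2))

section positions
variable (a b : Ordinal.{u} → V) (κ : Cardinal.{u})

theorem hkV_even (ξ : Ordinal.{u}) : hkV a b κ (2 * ξ) = b (hkH a b κ ξ) := by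
  have hm : (2 * ξ) % 2 = 0 := by
    have := Ordinal.mul_add_mod_self 2 ξ 0
    simp only [add_zero] at this
    rw [this, Ordinal.zero_mod]
  have hd : (2 * ξ) / 2 = ξ := Ordinal.mul_div_cancel ξ (two_ne_zero (α := Ordinal))
  rw [hkV, if_pos hm, hd]

theorem hkV_odd (ξ : Ordinal.{u}) : hkV a b κ (2 * ξ + 1) = a (hkK a b κ ξ) := by
  have hm : (2 * ξ + 1) % 2 = 1 := by
    have := Ordinal.mul_add_mod_self 2 ξ 1
    rwa [Ordinal.mod_eq_of_lt one_lt_two] at this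
  have hd : (2 * ξ + 1) / 2 = ξ := by
    rw [Ordinal.mul_add_div ξ (two_ne_zero (α := Ordinal)),
      Ordinal.div_eq_zero_of_lt one_lt_two, add_zero]
  rw [hkV, if_neg (by rw [hm]; exact one_ne_zero), hd]

theorem pos_odd_lt (hκ : ℵ₀ ≤ κ) {ξ : Ordinal.{u}} (hξ : ξ < κ.ord) : 2 * ξ + 1 < κ.ord := by
  rw [Cardinal.lt_ord, Ordinal.card_add, Ordinal.card_mul, Ordinal.card_one, Ordinal.card_ofNat]
  have hξc : ξ.card < κ := Cardinal.lt_ord.1 hξ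
  exact Cardinal.add_lt_of_lt hκ
    (Cardinal.mul_lt_of_lt hκ ((Cardinal.nat_lt_aleph0 2).trans_le hκ) hξc)
    (one_lt_aleph0.trans_le hκ)

theorem pos_even_lt (hκ : ℵ₀ ≤ κ) {ξ : Ordinal.{u}} (hξ : ξ < κ.ord) : 2 * ξ < κ.ord :=
  lt_trans (Order.lt_add_one_iff.2 le_rfl) (pos_odd_lt κ hκ hξ)

theorem pos_mono {ξ ζ : Ordinal.{u}} (h : ξ < ζ) : 2 * ξ + 1 < 2 * ζ := by
  have h1 : 2 * ξ + 1 < 2 * ξ + 2 := by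
    exact add_lt_add_right (by norm_num : (1 : Ordinal.{u}) < 2) (2 * ξ)
  have h2 : (2 : Ordinal) * (ξ + 1) = 2 * ξ + 2 := by
    rw [Ordinal.add_one_eq_succ, Ordinal.mul_succ]
  have h3 : (2 : Ordinal) * (ξ + 1) ≤ 2 * ζ :=
    mul_le_mul_right (Order.add_one_le_iff.2 h) 2
  exact lt_of_lt_of_le (h2 ▸ h1) h3

theorem div_two_lt {α : Ordinal.{u}} (hα : α < κ.ord) : α / 2 < κ.ord :=
  (Ordinal.div_lt (two_ne_zero (α := Ordinal))).2
    (lt_of_lt_of_le hα (Ordinal.le_mul_right κ.ord two_pos))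

theorem hkA_mem_used {η ξ : Ordinal.{u}} (h : η < ξ) : a (hkK a b κ η) ∈ hkUsed a b κ ξ :=
  ⟨η, h, Or.inl rfl⟩

theorem hkB_mem_used {η ξ : Ordinal.{u}} (h : η < ξ) : b (hkH a b κ η) ∈ hkUsed a b κ ξ :=
  ⟨η, h, Or.inr rfl⟩

theorem hkDistinct (hκ : ℵ₀ ≤ κ) (ha : Set.InjOn a (Set.Iio κ.ord))
    (hb : Set.InjOn b (Set.Iio κ.ord)) :
    (∀ ξ, ξ < κ.ord → ∀ ζ, ζ < κ.ord → a (hkK a b κ ξ) ≠ b (hkH a b κ ζ)) ∧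
    (∀ ξ, ξ < κ.ord → ∀ ζ, ζ < κ.ord → ξ ≠ ζ → a (hkK a b κ ξ) ≠ a (hkK a b κ ζ)) ∧
    (∀ ξ, ξ < κ.ord → ∀ ζ, ζ < κ.ord → ξ ≠ ζ → b (hkH a b κ ξ) ≠ b (hkH a b κ ζ)) := by
  have M := hkMain a b κ hκ ha hb
  refine ⟨?_, ?_, ?_⟩
  · intro ξ hξ ζ hζ heq
    rcases lt_trichotomy ξ ζ with h | h | h
    · exact (M ζ hζ).2.2.2.1 (heq ▸ hkA_mem_used a b κ h)
    · subst h
      exact (M ξ hξ).2.2.2.2.1 heq.symm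
    · exact (M ξ hξ).1.2 (heq.symm ▸ hkB_mem_used a b κ h)
  · intro ξ hξ ζ hζ hne heq
    rcases hne.lt_or_gt with h | h
    · exact (M ζ hζ).1.2 (heq ▸ hkA_mem_used a b κ h)
    · exact (M ξ hξ).1.2 (heq.symm ▸ hkA_mem_used a b κ h)
  · intro ξ hξ ζ hζ hne heq
    rcases hne.lt_or_gt with h | h
    · exact (M ζ hζ).2.2.2.1 (heq ▸ hkB_mem_used a b κ h)
    · exact (M ξ hξ).2.2.2.1 (heq.symm ▸ hkB_mem_used a b κ h)

theorem hkV_injOn (hκ : ℵ₀ ≤ κ) (ha : Set.InjOn a (Set.Iio κ.ord))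
    (hb : Set.InjOn b (Set.Iio κ.ord)) : Set.InjOn (hkV a b κ) (Set.Iio κ.ord) := by
  obtain ⟨dAB, dAA, dBB⟩ := hkDistinct a b κ hκ ha hb
  intro α hα β hβ heq
  have hα' : α / 2 < κ.ord := div_two_lt κ hα
  have hβ' : β / 2 < κ.ord := div_two_lt κ hβ
  have hda := Ordinal.div_add_mod α 2
  have hdb := Ordinal.div_add_mod β 2
  rcases ord_mod_two α with h1 | h1 <;> rcases ord_mod_two β with h2 | h2 <;>
    rw [hkV, hkV, h1, h2] at heq <;> simp only [if_pos, if_neg, one_ne_zero,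
      if_true, if_false, reduceIte] at heq
  · have : α / 2 = β / 2 := by
      by_contra hne
      exact dBB _ hα' _ hβ' hne heq
    rw [← hda, ← hdb, h1, h2, this]
  · exact absurd heq.symm (dAB _ hβ' _ hα')
  · exact absurd heq (dAB _ hα' _ hβ')
  · have : α / 2 = β / 2 := by
      by_contra hne
      exact dAA _ hα' _ hβ' hne heq
    rw [← hda, ← hdb, h1, h2, this]

end positions

/-- A graph of type H_{κ,κ} with main class `A` contains a Rado path of
order type κ which covers and is concentrated on `A`. -/
theorem stmt11 {V : Type u} (G : SimpleGraph V) (κ : Cardinal.{u}) (hκ : ℵ₀ ≤ κ)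
    (A : Set V) (h : IsHType G κ A) :
    ∃ P : RadoPath G, P.otype = κ.ord ∧ A ⊆ P.verts ∧ P.ConcentratedOn A := by
    classical
  obtain ⟨B, aa, bb, ha, hb, hA, hB, hadj⟩ := h
  have M := hkMain aa bb κ hκ ha hb
  obtain ⟨dAB, dAA, dBB⟩ := hkDistinct aa bb κ hκ ha hb
  have hinj : Set.InjOn (hkV aa bb κ) (Set.Iio κ.ord) := hkV_injOn aa bb κ hκ ha hb
  set v : Ordinal.{u} → V := hkV aa bb κ with hvdef
  set S : Set V := v '' Set.Iio κ.ord with hSdef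
  have hmem : ∀ α, α < κ.ord → v α ∈ S := fun α hα => ⟨α, hα, rfl⟩
  obtain ⟨idx, hidx⟩ : ∃ idx : S → Ordinal.{u}, ∀ x : S, idx x < κ.ord ∧ v (idx x) = ↑x :=
    ⟨fun x => Classical.choose x.2,
     fun x => ⟨(Classical.choose_spec x.2).1, (Classical.choose_spec x.2).2⟩⟩
  have idx_v : ∀ {α : Ordinal.{u}} (hα : α < κ.ord), idx ⟨v α, hmem α hα⟩ = α := by
    intro α hα
    exact hinj (hidx ⟨v α, hmem α hα⟩).1 hα (hidx ⟨v α, hmem α hα⟩).2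
  have idx_inj : Function.Injective idx := by
    intro x y hxy
    apply Subtype.ext
    rw [← (hidx x).2, ← (hidx y).2, hxy]
  have wo : IsWellOrder S (fun x y : S => idx x < idx y) :=
    RelEmbedding.isWellOrder ⟨⟨idx, idx_inj⟩, Iff.rfl⟩
  -- the key combinatorial step
  have key : ∀ y x : S, idx x < idx y →
      ∃ w : S, (G.Adj ↑w ↑y ∧ idx w < idx y ∧ ¬ idx w < idx x) ∧
        (idx y % 2 = 0 → (↑w : V) ∈ A) := by
    intro y x hxy
    have hβ : idx y < κ.ord := (hidx y).1
    have hvy : v (idx y) = ↑y := (hidx y).2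
    have hξ : idx y / 2 < κ.ord := div_two_lt κ hβ
    rcases ord_mod_two (idx y) with hpar | hpar
    · -- y sits at an even position 2ξ and is b (hkH ξ)
      have hβeq : 2 * (idx y / 2) = idx y := by
        have hdm := Ordinal.div_add_mod (idx y) 2
        rwa [hpar, add_zero] at hdm
      have hyb : (↑y : V) = bb (hkH aa bb κ (idx y / 2)) := by
        rw [← hvy]
        conv_lhs => rw [← hβeq]
        exact hkV_even aa bb κ _
      have hζξ : idx x / 2 < idx y / 2 := by
        rw [Ordinal.div_lt (two_ne_zero (α := Ordinal)), hβeq]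
        exact hxy
      have hζ : idx x / 2 < κ.ord := hζξ.trans hξ
      have hp : 2 * (idx x / 2) + 1 < κ.ord := pos_odd_lt κ hκ hζ
      refine ⟨⟨v (2 * (idx x / 2) + 1), hmem _ hp⟩, ⟨?_, ?_, ?_⟩, ?_⟩
      · show G.Adj (v (2 * (idx x / 2) + 1)) ↑y
        rw [hyb, hvdef, hkV_odd]
        exact hadj _ _ ((M _ hξ).2.2.2.2.2.2 _ hζξ).le (M _ hξ).2.2.1
      · rw [idx_v hp]
        conv_rhs => rw [← hβeq]
        exact pos_mono hζξ
      · rw [idx_v hp]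
        have hdm := Ordinal.div_add_mod (idx x) 2
        have hle : idx x ≤ 2 * (idx x / 2) + 1 := by
          conv_lhs => rw [← hdm]
          refine add_le_add_right ?_ _
          rcases ord_mod_two (idx x) with hh | hh <;> rw [hh] <;> simp
        exact not_lt.2 hle
      · intro _
        show v (2 * (idx x / 2) + 1) ∈ A
        rw [hvdef, hkV_odd, ← hA]
        exact ⟨hkK aa bb κ (idx x / 2), (M _ hζ).1.1, rfl⟩
    · -- y sits at an odd position 2ξ+1 and is a (hkK ξ)
      have hβeq : 2 * (idx y / 2) + 1 = idx y := by
        have hdm := Ordinal.div_add_mod (idx y) 2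
        rwa [hpar] at hdm
      have hya : (↑y : V) = aa (hkK aa bb κ (idx y / 2)) := by
        rw [← hvy]
        conv_lhs => rw [← hβeq]
        exact hkV_odd aa bb κ _
      have hp : 2 * (idx y / 2) < κ.ord := pos_even_lt κ hκ hξ
      refine ⟨⟨v (2 * (idx y / 2)), hmem _ hp⟩, ⟨?_, ?_, ?_⟩, ?_⟩
      · show G.Adj (v (2 * (idx y / 2))) ↑y
        rw [hya, hvdef, hkV_even]
        exact (hadj _ _ (M _ hξ).2.2.2.2.2.1 (M _ hξ).2.2.1).symm
      · rw [idx_v hp]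
        conv_rhs => rw [← hβeq]
        exact Order.lt_add_one_iff.2 le_rfl
      · rw [idx_v hp]
        have hxy' : idx x < 2 * (idx y / 2) + 1 := by
          conv_rhs => rw [hβeq]
          exact hxy
        exact not_lt.2 (Order.lt_add_one_iff.1 hxy')
      · intro h0
        rw [hpar] at h0
        exact absurd h0 one_ne_zero
  refine ⟨⟨S, fun x y : S => idx x < idx y, wo, fun y x hxy => ?_⟩, ?_, ?_, ?_⟩
  · obtain ⟨w, hw, -⟩ := key y x hxy
    exact ⟨w, hw.1, hw.2.1, hw.2.2⟩
  · -- order type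
    haveI := wo
    show @Ordinal.type S (fun x y : S => idx x < idx y) wo = κ.ord
    have einj : Function.Injective
        (fun x : S => Ordinal.ToType.mk ⟨idx x, (hidx x).1⟩) := by
      intro x y hxy
      have h1 := (Ordinal.ToType.mk (o := κ.ord)).injective hxy
      exact idx_inj (congrArg Subtype.val h1)
    have esurj : Function.Surjective
        (fun x : S => Ordinal.ToType.mk ⟨idx x, (hidx x).1⟩) := by
      intro t
      set s := (Ordinal.ToType.mk (o := κ.ord)).symm t with hsdef
      refine ⟨⟨v s.1, hmem s.1 s.2⟩, ?_⟩
      have h2 : (⟨idx ⟨v s.1, hmem s.1 s.2⟩, (hidx ⟨v s.1, hmem s.1 s.2⟩).1⟩ :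
          Set.Iio κ.ord) = s := Subtype.ext (idx_v s.2)
      show Ordinal.ToType.mk
        ⟨idx ⟨v s.1, hmem s.1 s.2⟩, (hidx ⟨v s.1, hmem s.1 s.2⟩).1⟩ = t
      rw [h2, hsdef, OrderIso.apply_symm_apply]
    have f : (fun x y : S => idx x < idx y) ≃r
        ((· < ·) : κ.ord.ToType → κ.ord.ToType → Prop) := by
      refine ⟨Equiv.ofBijective _ ⟨einj, esurj⟩, ?_⟩
      intro x y
      show Ordinal.ToType.mk ⟨idx x, (hidx x).1⟩ <
        Ordinal.ToType.mk ⟨idx y, (hidx y).1⟩ ↔ idx x < idx y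
      rw [OrderIso.lt_iff_lt]
      exact Subtype.mk_lt_mk
    haveI hwo2 : IsWellOrder κ.ord.ToType (· < ·) := isWellOrder_lt
    have h1 : @Ordinal.type S (fun x y : S => idx x < idx y) wo =
        Ordinal.type ((· < ·) : κ.ord.ToType → κ.ord.ToType → Prop) :=
      Ordinal.type_eq.2 ⟨f⟩
    rw [h1, Ordinal.type_toType]
  · -- A ⊆ S
    intro u hu
    rw [← hA] at hu
    obtain ⟨m, hm, rfl⟩ := hu
    by_contra hnot
    have hfresh : ∀ ξ, ξ < κ.ord → hkK aa bb κ ξ ≤ m := by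
      intro ξ hξ
      have hmk : m ∈ hkKset aa bb κ ξ := by
        refine ⟨hm, fun hused => hnot ?_⟩
        obtain ⟨η, hη, hcase⟩ := hused
        rcases hcase with hc | hc
        · rw [hc, ← hkV_odd aa bb κ η]
          exact hmem _ (pos_odd_lt κ hκ (hη.trans hξ))
        · rw [hc, ← hkV_even aa bb κ η]
          exact hmem _ (pos_even_lt κ hκ (hη.trans hξ))
      rw [hkK_eq]
      exact csInf_le (OrderBot.bddBelow _) hmk
    have hemb : Function.Injective
        (fun ξ : Set.Iio κ.ord => (⟨hkK aa bb κ ξ.1, hfresh ξ.1 ξ.2⟩ : Set.Iic m)) := by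
      intro ξ ζ hh
      apply Subtype.ext
      by_contra hne
      exact dAA ξ.1 ξ.2 ζ.1 ζ.2 hne (congrArg aa (congrArg Subtype.val hh))
    have hle := Cardinal.mk_le_of_injective hemb
    have hIic : (Set.Iic m : Set Ordinal.{u}) = Set.Iio (m + 1) := by
      rw [Ordinal.add_one_eq_succ, Order.Iio_succ]
    rw [Ordinal.mk_Iio_ordinal, Cardinal.card_ord, hIic, Ordinal.mk_Iio_ordinal,
      Cardinal.lift_le] at hle
    have hm1 : m + 1 < κ.ord := by
      rw [Ordinal.add_one_eq_succ]
      exact (Cardinal.isSuccLimit_ord hκ).succ_lt hm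
    exact absurd hle (not_le.2 (Cardinal.lt_ord.1 hm1))
  · -- concentrated on A
    intro y hy x hxy
    rcases ord_mod_two (idx y) with hpar | hpar
    · obtain ⟨w, hw1, hw2⟩ := key y x hxy
      exact ⟨w, hw2 hpar, hw1.1, hw1.2.2, hw1.2.1⟩
    · exfalso
      have hβ : idx y < κ.ord := (hidx y).1
      have hβeq : 2 * (idx y / 2) + 1 = idx y := by
        have hdm := Ordinal.div_add_mod (idx y) 2
        rwa [hpar] at hdm
      have hp : 2 * (idx y / 2) < κ.ord := pos_even_lt κ hκ (div_two_lt κ hβ)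
      have hlt : idx (⟨v (2 * (idx y / 2)), hmem _ hp⟩ : S) < idx y := by
        rw [idx_v hp]
        conv_rhs => rw [← hβeq]
        exact Order.lt_add_one_iff.2 le_rfl
      obtain ⟨z, hz1, hz2⟩ := hy.2 _ hlt
      have hz1' : idx (⟨v (2 * (idx y / 2)), hmem _ hp⟩ : S) < idx z := hz1
      have hz2' : idx z < idx y := hz2
      rw [idx_v hp] at hz1'
      have hz2'' : idx z < 2 * (idx y / 2) + 1 := by
        conv_rhs => rw [hβeq]
        exact hz2'
      exact absurd (Order.lt_add_one_iff.1 hz2'') (not_le.2 hz1')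
end

section
/- Let κ be an infinite cardinal and G a κ-complete graph of size κ with an r-edge colouring, r finite. Then there is a colour i < r and a set A ⊆ V(G) of size κ such that A is κ-connected in colour i (any two distinct points of A are joined by κ-many pairwise internally disjoint finite paths within A, all of whose edges are coloured i). -/
open Cardinal

universe u

variable {V : Type u}

/-- In any finitely edge coloured κ-complete graph of size κ there is a
set of size κ which is κ-connected in some colour. -/
theorem stmt18 {V : Type u} (κ : Cardinal.{u}) (hκ : ℵ₀ ≤ κ) (G : SimpleGraph V)
    (hV : #V = κ) (hcomp : KComplete G κ)
    (r : ℕ) (hr : 0 < r) (c : Sym2 V → Fin r) :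
    ∃ i : Fin r, ∃ A : Set V, #A = κ ∧
      Unseparable (restrictTo (colGraph G c i) A) A κ := by
  classical
  -- the filter of sets with small complement
  set F : Filter V := Filter.comk (fun s => #s < κ)
    (by show #(∅ : Set V) < κ; rw [Cardinal.mk_emptyCollection]; exact aleph0_pos.trans_le hκ)
    (fun t ht s hst => (Cardinal.mk_le_mk_of_subset hst).trans_lt ht)
    (fun s hs t ht => (Cardinal.mk_union_le s t).trans_lt (Cardinal.add_lt_of_lt hκ hs ht))
    with hF
  have hFne : F.NeBot := by
    refine ⟨fun h => ?_⟩
    have hmem : (∅ : Set V) ∈ F := h ▸ Filter.mem_bot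
    rw [hF, Filter.mem_comk, Set.compl_empty, Cardinal.mk_univ, hV] at hmem
    exact lt_irrefl _ hmem
  set U : Ultrafilter V := Ultrafilter.of F with hUdef
  have hU : ∀ s : Set V, #↥(sᶜ) < κ → s ∈ U := by
    intro s hs
    exact (Ultrafilter.of_le F) (by rw [hF, Filter.mem_comk]; exact hs)
  have hbig : ∀ s : Set V, s ∈ U → κ ≤ #s := by
    intro s hs
    by_contra h
    push_neg at h
    have h2 : sᶜ ∈ U := hU _ (by rwa [compl_compl])
    exact (Ultrafilter.compl_notMem_iff.2 hs) h2
  have hadj : ∀ v : V, {u | G.Adj v u} ∈ U := by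
    intro v
    apply hU
    have he : {u | G.Adj v u}ᶜ = {u : V | ¬ G.Adj v u} := by ext u; simp
    rw [he]; exact hcomp.2 v
  have hone : ∀ v : V, ({v}ᶜ : Set V) ∈ U := fun v => hU _ (by
    rw [compl_compl, Cardinal.mk_singleton]; exact one_lt_aleph0.trans_le hκ)
  -- the U-colour of each vertex
  have hφ : ∀ v : V, ∃ i : Fin r, {u | c s(v, u) = i} ∈ U := by
    intro v
    obtain ⟨i, hi⟩ := Ultrafilter.eq_pure_of_finite (U.map (fun u => c s(v, u)))
    refine ⟨i, ?_⟩
    have h1 : ({i} : Set (Fin r)) ∈ U.map (fun u => c s(v, u)) := by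
      rw [hi]; exact Ultrafilter.mem_pure.2 rfl
    simpa [Ultrafilter.mem_map, Set.preimage] using h1
  choose φ hφs using hφ
  obtain ⟨i₀, hi₀⟩ := Ultrafilter.eq_pure_of_finite (U.map φ)
  have hA : {v | φ v = i₀} ∈ U := by
    have h1 : ({i₀} : Set (Fin r)) ∈ U.map φ := by
      rw [hi₀]; exact Ultrafilter.mem_pure.2 rfl
    simpa [Ultrafilter.mem_map, Set.preimage] using h1
  set A : Set V := {v | φ v = i₀} with hAdef
  refine ⟨i₀, A, le_antisymm (hV ▸ Cardinal.mk_set_le A) (hbig A hA), ?_⟩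
  intro v hv w hw hvw
  set G' : SimpleGraph V := restrictTo (colGraph G c i₀) A with hG'
  -- the large set of middle vertices
  set S : Set V := {u | G.Adj v u} ∩ {u | c s(v, u) = i₀} ∩ {u | G.Adj w u} ∩
      {u | c s(w, u) = i₀} ∩ A ∩ {v}ᶜ ∩ {w}ᶜ with hSdef
  have hSU : S ∈ U := by
    have h1 : {u | c s(v, u) = i₀} ∈ U := hv ▸ hφs v
    have h2 : {u | c s(w, u) = i₀} ∈ U := hw ▸ hφs w
    exact Filter.inter_mem (Filter.inter_mem (Filter.inter_mem (Filter.inter_mem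
      (Filter.inter_mem (Filter.inter_mem (hadj v) h1) (hadj w)) h2) hA) (hone v)) (hone w)
  have hSprop : ∀ u ∈ S, G.Adj v u ∧ c s(v, u) = i₀ ∧ G.Adj w u ∧ c s(w, u) = i₀ ∧
      u ∈ A ∧ u ≠ v ∧ u ≠ w := by
    intro u hu
    obtain ⟨⟨⟨⟨⟨⟨a1, a2⟩, a3⟩, a4⟩, a5⟩, a6⟩, a7⟩ := hu
    exact ⟨a1, a2, a3, a4, a5, a6, a7⟩
  -- build a length-2 path through each u ∈ S
  have hmk : ∀ u : S, ∃ p : G'.Path v w, p.1.support = [v, ↑u, w] := by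
    rintro ⟨u, hu⟩
    obtain ⟨a1, a2, a3, a4, a5, a6, a7⟩ := hSprop u hu
    have e1 : G'.Adj v u := ⟨⟨a1, a2⟩, hv, a5⟩
    have e2 : G'.Adj u w := ⟨⟨a3.symm, by rwa [Sym2.eq_swap]⟩, a5, hw⟩
    refine ⟨⟨SimpleGraph.Walk.cons e1 (SimpleGraph.Walk.cons e2 SimpleGraph.Walk.nil), ?_⟩, ?_⟩
    · rw [SimpleGraph.Walk.isPath_def]
      simp only [SimpleGraph.Walk.support_cons, SimpleGraph.Walk.support_nil]
      simp [List.nodup_cons, a6.symm, a7, hvw, e1.ne, e2.ne]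
    · simp [SimpleGraph.Walk.support_cons, SimpleGraph.Walk.support_nil]
  choose p hp using hmk
  have hpinj : Function.Injective p := by
    intro a b hab
    have hsup : ([v, ↑a, w] : List V) = [v, ↑b, w] := by
      rw [← hp a, ← hp b, hab]
    have := (List.cons.inj hsup).2
    exact Subtype.ext (List.cons.inj this).1
  refine ⟨Set.range p, ?_, ?_⟩
  · rw [Cardinal.mk_range_eq p hpinj]
    exact hbig S hSU
  · rintro q1 ⟨u1, rfl⟩ q2 ⟨u2, rfl⟩ hne x hx1 hx2
    have hu12 : (↑u1 : V) ≠ ↑u2 := fun h => hne (congrArg p (Subtype.ext h))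
    rw [hp u1] at hx1
    rw [hp u2] at hx2
    simp only [List.mem_cons, List.not_mem_nil, or_false] at hx1 hx2
    rcases hx1 with rfl | rfl | rfl
    · exact Or.inl rfl
    · rcases hx2 with h | h | h
      · exact Or.inl h
      · exact absurd h hu12
      · exact Or.inr h
    · exact Or.inr rfl
end
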